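/- arXiv:0806.2180 — 4 statements merged into one kernel-verified Lean document; each statement's English description precedes it below -/
import Mathlib

section
/- Let μ > 0, q ≠ 0, m = sqrt(μ² + q²), and Φ⁺_μ(r) = sqrt(1 + m/r + μ²/(4r²)). Then the function u⁺_μ(r) = Φ⁺_μ(r) - 1 - μ/(2r), extended by u⁺_μ(0) = m/μ - 1, is continuous at r = 0 with limit m/μ - 1, and its derivative has limit -q²/μ³ as r → 0⁺. -/
open Filter Topology Set in
theorem u_plus_limits_at_origin (μ q : ℝ) (hμ : 0 < μ) (hq : q ≠ 0) (m : ℝ)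
    (hm : m = Real.sqrt (μ^2 + q^2))
    (u : ℝ → ℝ)
    (hu : ∀ r, u r = Real.sqrt (1 + m/r + μ^2/(4*r^2)) - 1 - μ/(2*r)) :
    Tendsto u (nhdsWithin 0 (Ioi 0)) (nhds (m/μ - 1)) ∧
    Tendsto (fun r => deriv u r) (nhdsWithin 0 (Ioi 0)) (nhds (-q^2/μ^3)) := by
  have hm2 : m^2 = μ^2 + q^2 := by
    rw [hm, Real.sq_sqrt (by positivity)]
  have hmpos : 0 < m := by rw [hm]; exact Real.sqrt_pos.mpr (by positivity)
  -- P r = 4r² + 4mr + μ², s r = √(P r)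
  set P : ℝ → ℝ := fun r => 4*r^2 + 4*m*r + μ^2 with hP
  set s : ℝ → ℝ := fun r => Real.sqrt (P r) with hs
  have hPpos : ∀ r : ℝ, 0 ≤ r → 0 < P r := by
    intro r hr
    have : 0 ≤ 4*m*r := by positivity
    simp only [hP]; nlinarith [sq_nonneg r]
  have hspos : ∀ r : ℝ, 0 ≤ r → 0 < s r := fun r hr =>
    Real.sqrt_pos.mpr (hPpos r hr)
  have hs2 : ∀ r : ℝ, 0 ≤ r → (s r)^2 = P r := fun r hr =>
    Real.sq_sqrt (hPpos r hr).le
  have hs0 : s 0 = μ := by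
    simp only [hs, hP]
    rw [show 4*(0:ℝ)^2 + 4*m*0 + μ^2 = μ^2 by ring, Real.sqrt_sq hμ.le]
  -- g is the nice form of u
  set g : ℝ → ℝ := fun r => (2*r + 2*m)/(s r + μ) - 1 with hg
  have hug : ∀ r ∈ Ioi (0:ℝ), u r = g r := by
    intro r hr
    have hr0 : 0 < r := hr
    have hsr := hspos r hr0.le
    have hsq := hs2 r hr0.le
    have h1 : 1 + m/r + μ^2/(4*r^2) = (s r/(2*r))^2 := by
      rw [div_pow, hsq]
      simp only [hP]
      field_simp
      ring
    rw [hu, h1, Real.sqrt_sq (by positivity), hg]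
    have hden : s r + μ ≠ 0 := by positivity
    field_simp
    linear_combination hsq
  -- continuity of s
  have hscont : Continuous s := by
    apply Real.continuous_sqrt.comp
    continuity
  constructor
  · apply tendsto_nhdsWithin_congr (fun r hr => (hug r hr).symm)
    have hcg : ContinuousAt g 0 := by
      apply ContinuousAt.sub _ continuousAt_const
      apply ContinuousAt.div (by fun_prop) (hscont.continuousAt.add continuousAt_const)
      show s 0 + μ ≠ 0; rw [hs0]; positivity
    have : g 0 = m/μ - 1 := by
      simp only [hg, hs0]
      field_simp
      ring
    rw [← this]
    exact hcg.continuousWithinAt.tendsto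
  · -- derivative
    set D : ℝ → ℝ := fun r =>
      (2*(s r + μ) - (2*r + 2*m) * ((8*r + 4*m)/(2 * s r)))/(s r + μ)^2 with hD
    have hgderiv : ∀ r ∈ Ioi (0:ℝ), HasDerivAt g (D r) r := by
      intro r hr
      have hr0 : 0 < r := hr
      have hsr := hspos r hr0.le
      have hPne : P r ≠ 0 := (hPpos r hr0.le).ne'
      have h1 : HasDerivAt P (8*r + 4*m) r := by
        have h1' := ((hasDerivAt_pow 2 r).const_mul 4).add
          (((hasDerivAt_id r).const_mul (4*m)).add_const (μ^2))
        exact (h1'.congr_deriv (g' := 8*r + 4*m) (by push_cast; ring)).congr_of_eventuallyEq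
          (Filter.Eventually.of_forall fun x => by simp only [hP, Pi.add_apply, id]; ring)
      have h2 : HasDerivAt s ((8*r + 4*m)/(2 * s r)) r := by
        have := (Real.hasDerivAt_sqrt hPne).comp r h1
        exact this.congr_deriv (by simp only [hs]; ring)
      have hnum : HasDerivAt (fun x => 2*x + 2*m) 2 r := by
        simpa using ((hasDerivAt_id r).const_mul 2).add_const (2*m)
      have hden : HasDerivAt (fun x => s x + μ) ((8*r + 4*m)/(2 * s r)) r :=
        h2.add_const μ
      have hdne : s r + μ ≠ 0 := by positivity
      have := (hnum.div hden hdne).sub_const 1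
      exact this
    have hud : ∀ r ∈ Ioi (0:ℝ), deriv u r = D r := by
      intro r hr
      have heq : u =ᶠ[nhds r] g :=
        Filter.eventuallyEq_of_mem (isOpen_Ioi.mem_nhds hr) hug
      rw [heq.deriv_eq, (hgderiv r hr).deriv]
    apply tendsto_nhdsWithin_congr (fun r hr => (hud r hr).symm)
    have hcD : ContinuousAt D 0 := by
      have hs0' : s 0 ≠ 0 := by rw [hs0]; exact hμ.ne'
      have hden0 : (s 0 + μ)^2 ≠ 0 := by rw [hs0]; positivity
      apply ContinuousAt.div
      · apply ContinuousAt.sub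
        · exact ((hscont.continuousAt.add continuousAt_const).const_mul 2)
        · apply ContinuousAt.mul (by fun_prop)
          exact ContinuousAt.div (by fun_prop) (hscont.continuousAt.const_mul 2)
            (by simpa using mul_ne_zero two_ne_zero hs0')
      · exact (hscont.continuousAt.add continuousAt_const).pow 2
      · exact hden0
    have hD0 : D 0 = -q^2/μ^3 := by
      simp only [hD, hs0]
      field_simp
      linear_combination (-4) * hm2
    rw [← hD0]
    exact hcD.continuousWithinAt.tendsto
end

section
/- Let J ≠ 0 and q² ≥ 3|J|, m ≥ |q|, μ ≥ 0, and Φ⁺(r) = sqrt(1 + m/r + μ²/(4r²)). Then for all r > 0 and θ ∈ [0, π]: q²/(4r⁴ Φ⁺(r)³) ≥ 9J² sin²θ/(4 r⁶ Φ⁺(r)⁷). -/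
theorem supersolution_inequality (J q m μ : ℝ) (hJ : J ≠ 0) (hq : q^2 ≥ 3*|J|)
    (hm : m ≥ |q|) (hμ : 0 ≤ μ) :
    ∀ r θ : ℝ, 0 < r → θ ∈ Set.Icc 0 Real.pi →
      9*J^2*(Real.sin θ)^2 / (4*r^6*(Real.sqrt (1 + m/r + μ^2/(4*r^2)))^7)
        ≤ q^2 / (4*r^4*(Real.sqrt (1 + m/r + μ^2/(4*r^2)))^3) := by
  intro r θ hr _
  set A := 1 + m/r + μ^2/(4*r^2) with hA
  have hq0 : (0:ℝ) ≤ |q| := abs_nonneg q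
  have hm0 : (0:ℝ) ≤ m := le_trans hq0 hm
  have hA0 : 1 ≤ A := by
    have h1 : 0 ≤ m/r := div_nonneg hm0 hr.le
    have h2 : 0 ≤ μ^2/(4*r^2) := by positivity
    simp only [hA]; linarith
  set s := Real.sqrt A with hs
  have hs1 : 1 ≤ s := Real.one_le_sqrt.mpr hA0
  have hs0 : 0 < s := lt_of_lt_of_le one_pos hs1
  have hsq : s^2 = A := Real.sq_sqrt (by linarith)
  -- A ≥ |q|/r hence r^2 * s^4 ≥ q^2
  have hAq : |q|/r ≤ A := by
    have h1 : |q|/r ≤ m/r := by gcongr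
    have h2 : 0 ≤ μ^2/(4*r^2) := by positivity
    simp only [hA]; linarith
  have hkey : q^2 ≤ r^2 * s^4 := by
    have h1 : |q| ≤ r * A := by
      have := (div_le_iff₀ hr).mp hAq
      linarith [this]
    have h2 : |q|^2 ≤ (r*A)^2 := by nlinarith [abs_nonneg q]
    have : s^4 = A^2 := by rw [show s^4 = (s^2)^2 by ring, hsq]
    rw [this]; nlinarith [sq_abs q]
  have hq4 : 9*J^2 ≤ q^4 := by
    have h1 : (3*|J|)^2 ≤ (q^2)^2 := by
      have := mul_self_le_mul_self (by positivity : (0:ℝ) ≤ 3*|J|) hq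
      nlinarith [abs_nonneg J]
    nlinarith [sq_abs J]
  have hsin : (Real.sin θ)^2 ≤ 1 := Real.sin_sq_le_one θ
  rw [div_le_div_iff₀ (by positivity) (by positivity)]
  nlinarith [sq_nonneg (Real.sin θ), sq_nonneg q, pow_pos hs0 3, pow_pos hr 4,
    mul_le_mul_of_nonneg_right hq4 (show (0:ℝ) ≤ 4*r^4*s^3 by positivity),
    mul_le_mul_of_nonneg_right hkey (show (0:ℝ) ≤ q^2*(4*r^4*s^3) by positivity),
    mul_le_mul_of_nonneg_right hsin (show (0:ℝ) ≤ 9*J^2*(4*r^4*s^3) by positivity)]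
end

section
/- For μ ≥ 0, q ≠ 0, m = sqrt(μ² + q²), the radial function u⁺_μ(r) = sqrt(1 + m/r + μ²/(4r²)) - 1 - μ/(2r) satisfies the radial Laplace equation u'' + (2/r)u' = -q²/(4r⁴ (1 + m/r + μ²/(4r²))^(3/2)) for all r > 0. -/
set_option maxHeartbeats 2000000 in

theorem RN_laplacian (μ q : ℝ) (hμ : 0 ≤ μ) (hq : q ≠ 0) (m : ℝ)
    (hm : m = Real.sqrt (μ^2 + q^2))
    (u : ℝ → ℝ)
    (hu : ∀ r, u r = Real.sqrt (1 + m/r + μ^2/(4*r^2)) - 1 - μ/(2*r)) :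
    ∀ r : ℝ, 0 < r →
      deriv (deriv u) r + (2/r) * deriv u r
        = -q^2 / (4*r^4 * (1 + m/r + μ^2/(4*r^2)) ^ ((3:ℝ)/2)) := by
  have hm0 : 0 ≤ m := hm ▸ Real.sqrt_nonneg _
  have hq2 : m ^ 2 = μ ^ 2 + q ^ 2 := by
    rw [hm]; exact Real.sq_sqrt (by positivity)
  have hufun : u = fun x => Real.sqrt (1 + m/x + μ^2/(4*x^2)) - 1 - μ/(2*x) := funext hu
  -- positivity of the argument of sqrt
  have hwpos : ∀ x : ℝ, 0 < x → 0 < 1 + m/x + μ^2/(4*x^2) := by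
    intro x hx; positivity
  -- derivative of the inner function
  have hwd : ∀ x : ℝ, 0 < x →
      HasDerivAt (fun y : ℝ => 1 + m/y + μ^2/(4*y^2)) (-(m/x^2) - μ^2/(2*x^3)) x := by
    intro x hx
    have h1 : HasDerivAt (fun y : ℝ => m/y) (m * -(x^2)⁻¹) x := by
      simpa [div_eq_mul_inv] using (hasDerivAt_inv hx.ne').const_mul m
    have h2 : HasDerivAt (fun y : ℝ => μ^2/(4*y^2)) ((μ^2/4) * -(↑2 * x ^ 1 / (x ^ 2) ^ 2)) x := by
      have := ((hasDerivAt_pow 2 x).inv (pow_ne_zero 2 hx.ne')).const_mul (μ^2/4)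
      convert this using 2 with y
      all_goals first | rfl | (simp only [Pi.inv_apply]; field_simp; try ring) | (field_simp; try ring) | (norm_num; try ring)
    have := ((hasDerivAt_const x (1:ℝ)).add h1).add h2
    refine this.congr_deriv ?_
    field_simp
    ring
  -- first derivative of u
  set g : ℝ → ℝ := fun x =>
    (-(m/x^2) - μ^2/(2*x^3)) / (2 * Real.sqrt (1 + m/x + μ^2/(4*x^2))) + μ/(2*x^2) with hg
  have hud : ∀ x : ℝ, 0 < x → HasDerivAt u (g x) x := by
    intro x hx
    rw [hufun]
    have hs := (hwd x hx).sqrt (hwpos x hx).ne'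
    have h3 : HasDerivAt (fun y : ℝ => μ/(2*y)) ((μ/2) * -(x^2)⁻¹) x := by
      have := (hasDerivAt_inv hx.ne').const_mul (μ/2)
      convert this using 2 with y
      all_goals first | rfl | (simp only [Pi.inv_apply]; field_simp; try ring) | (field_simp; try ring) | (norm_num; try ring)
    have := (hs.sub (hasDerivAt_const x (1:ℝ))).sub h3
    refine this.congr_deriv ?_
    rw [hg]
    field_simp
    ring
  intro r hr
  have hsq : 0 < Real.sqrt (1 + m/r + μ^2/(4*r^2)) := Real.sqrt_pos.mpr (hwpos r hr)
  -- deriv u agrees with g near r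
  have hev : deriv u =ᶠ[nhds r] g := by
    filter_upwards [Ioi_mem_nhds hr] with x hx
    exact (hud x hx).deriv
  have hdd : deriv (deriv u) r = deriv g r := Filter.EventuallyEq.deriv_eq hev
  -- derivative of g at r
  have hA : HasDerivAt (fun x : ℝ => -(m/x^2) - μ^2/(2*x^3))
      (2*m/r^3 + 3*μ^2/(2*r^4)) r := by
    have h1 : HasDerivAt (fun y : ℝ => -(m/y^2)) (-(m * (-(↑2 * r ^ 1) / (r ^ 2) ^ 2))) r := by
      have := (((hasDerivAt_pow 2 r).inv (pow_ne_zero 2 hr.ne')).const_mul m).neg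
      convert this using 2 with y
      all_goals first | rfl | (simp only [Pi.inv_apply]; field_simp; try ring) | (field_simp; try ring) | (norm_num; try ring)
    have h2 : HasDerivAt (fun y : ℝ => μ^2/(2*y^3)) ((μ^2/2) * (-(↑3 * r ^ 2) / (r ^ 3) ^ 2)) r := by
      have := ((hasDerivAt_pow 3 r).inv (pow_ne_zero 3 hr.ne')).const_mul (μ^2/2)
      convert this using 2 with y
      all_goals first | rfl | (simp only [Pi.inv_apply]; field_simp; try ring) | (field_simp; try ring) | (norm_num; try ring)
    have := h1.sub h2
    refine this.congr_deriv ?_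
    field_simp
    ring
  have hD : HasDerivAt (fun x : ℝ => 2 * Real.sqrt (1 + m/x + μ^2/(4*x^2)))
      (2 * ((-(m/r^2) - μ^2/(2*r^3)) / (2 * Real.sqrt (1 + m/r + μ^2/(4*r^2))))) r :=
    ((hwd r hr).sqrt (hwpos r hr).ne').const_mul 2
  have hDne : 2 * Real.sqrt (1 + m/r + μ^2/(4*r^2)) ≠ 0 := by positivity
  have h3 : HasDerivAt (fun y : ℝ => μ/(2*y^2)) ((μ/2) * (-(↑2 * r ^ 1) / (r ^ 2) ^ 2)) r := by
    have := ((hasDerivAt_pow 2 r).inv (pow_ne_zero 2 hr.ne')).const_mul (μ/2)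
    convert this using 2 with y
    all_goals first | rfl | (simp only [Pi.inv_apply]; field_simp; try ring) | (field_simp; try ring) | (norm_num; try ring)
  have hgd : HasDerivAt g
      (((2*m/r^3 + 3*μ^2/(2*r^4)) * (2 * Real.sqrt (1 + m/r + μ^2/(4*r^2)))
        - (-(m/r^2) - μ^2/(2*r^3)) *
          (2 * ((-(m/r^2) - μ^2/(2*r^3)) / (2 * Real.sqrt (1 + m/r + μ^2/(4*r^2))))))
        / (2 * Real.sqrt (1 + m/r + μ^2/(4*r^2))) ^ 2
      + (μ/2) * (-(↑2 * r ^ 1) / (r ^ 2) ^ 2)) r := by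
    exact (hA.div hD hDne).add h3
  rw [hdd, hgd.deriv, (hud r hr).deriv]
  simp only [hg]
  -- now pure algebra
  set s := Real.sqrt (1 + m/r + μ^2/(4*r^2)) with hs
  have hs2 : s ^ 2 = 1 + m/r + μ^2/(4*r^2) := Real.sq_sqrt (hwpos r hr).le
  have hrpow : (1 + m/r + μ^2/(4*r^2)) ^ ((3:ℝ)/2) = s^2 * s := by
    rw [show ((3:ℝ)/2) = 1 + 1/2 by norm_num, Real.rpow_add (hwpos r hr), Real.rpow_one,
      ← Real.sqrt_eq_rpow, ← hs, ← hs2]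
  rw [hrpow]
  have hws : s ^ 2 * (4 * r ^ 2) = 4*r^2 + 4*m*r + μ^2 := by
    rw [hs2]; field_simp
  have hq2' : q ^ 2 = m ^ 2 - μ ^ 2 := by linarith [hq2]
  field_simp
  linear_combination 4*μ^2*hws + 16*r^2*hq2'
end

section
/- For q > 0 and r > 0, define I₂(r) = (4J²√π/(5q⁶√r))·((128r⁴ + 192r³q + 48r²q² - 8q³r + 3q⁴)/(r+q)^(3/2) - 128r^(5/2)). Then I₁(r) - (1/5)·I₂(r) ≥ 0 for all r > 0, where I₁(r) = (4J²√π/(5q⁴√r))·((24r² + 40qr + 15q²)/(r+q)^(3/2) - 24√r). -/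
theorem I1_minus_I2_div5_nonneg (J q : ℝ) (hJ : J ≠ 0) (hq : 0 < q)
    (I₁ I₂ : ℝ → ℝ)
    (hI₁ : ∀ r, I₁ r = (4*J^2*Real.sqrt Real.pi/(5*q^4*Real.sqrt r)) *
        ((24*r^2 + 40*q*r + 15*q^2)/(r+q) ^ ((3:ℝ)/2) - 24*Real.sqrt r))
    (hI₂ : ∀ r, I₂ r = (4*J^2*Real.sqrt Real.pi/(5*q^6*Real.sqrt r)) *
        ((128*r^4 + 192*r^3*q + 48*r^2*q^2 - 8*q^3*r + 3*q^4)/(r+q) ^ ((3:ℝ)/2)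
          - 128*r ^ ((5:ℝ)/2))) :
    ∀ r, 0 < r → 0 ≤ I₁ r - I₂ r / 5 := by
  intro r hr
  set s := Real.sqrt r with hs_def
  set t := Real.sqrt (r + q) with ht_def
  have hrq : (0:ℝ) < r + q := by linarith
  have hs : 0 < s := Real.sqrt_pos.mpr hr
  have ht : 0 < t := Real.sqrt_pos.mpr hrq
  have hst : s < t := Real.sqrt_lt_sqrt hr.le (by linarith)
  have hr' : s ^ 2 = r := Real.sq_sqrt hr.le
  have ht2 : t ^ 2 = r + q := Real.sq_sqrt hrq.le
  have hq' : q = t ^ 2 - s ^ 2 := by rw [hr', ht2]; ring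
  have h32 : (r + q) ^ ((3:ℝ)/2) = t ^ 3 := by
    rw [ht_def, Real.sqrt_eq_rpow, ← Real.rpow_natCast ((r+q) ^ ((1:ℝ)/2)) 3,
      ← Real.rpow_mul hrq.le]
    norm_num
  have h52 : r ^ ((5:ℝ)/2) = s ^ 5 := by
    rw [hs_def, Real.sqrt_eq_rpow, ← Real.rpow_natCast (r ^ ((1:ℝ)/2)) 5,
      ← Real.rpow_mul hr.le]
    norm_num
  have hJ2 : 0 < J ^ 2 := pow_pos (abs_pos.mpr hJ) 2 |>.trans_eq (by rw [sq_abs])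
  have hpi : 0 < Real.sqrt Real.pi := Real.sqrt_pos.mpr Real.pi_pos
  have hq6 : q ^ 6 ≠ 0 := by positivity
  have key : I₁ r - I₂ r / 5 =
      4 * J ^ 2 * Real.sqrt Real.pi * (8 * (t - s) ^ 3 * (9 * t ^ 2 + 12 * s * t - s ^ 2))
        / (25 * q ^ 6 * s) := by
    rw [hI₁, hI₂, h32, h52, ← hr', hq']
    rw [Real.sqrt_sq hs.le]
    have hts : t ^ 2 - s ^ 2 ≠ 0 := by nlinarith
    field_simp
    ring
  rw [key]
  have h1 : 0 < t - s := by linarith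
  have h2 : 0 < 9 * t ^ 2 + 12 * s * t - s ^ 2 := by nlinarith
  positivity
end
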